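/- Let μ be a finite positive Borel measure on ℂ with μ({ζ}) = 0, and let M(w) = ∫ 1/|u - w| dμ(u) be its Newton potential. Then for every ε > 0, the set Π(ε) = {w ∈ ℂ : |w - ζ| · M(w) > ε} has zero density at ζ, i.e., lim_{r→0+} L(Π(ε) ∩ D(ζ,r))/(π r²) = 0. -/

import Mathlib

open MeasureTheory Metric ENNReal Filter Topology

/-- The Newton potential `M_μ(z) = ∫ 1/|w - z| dμ(w)` of a measure on `ℂ`. -/
noncomputable def newtonPot (μ : Measure ℂ) (z : ℂ) : ℝ≥0∞ :=
  ∫⁻ w, (ENNReal.ofReal (‖w - z‖))⁻¹ ∂μ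


lemma ker_meas : Measurable (fun p : ℂ × ℂ => (ENNReal.ofReal (‖p.1 - p.2‖))⁻¹) := by
  apply Measurable.inv
  apply Measurable.ennreal_ofReal
  exact (continuous_norm.comp (continuous_fst.sub continuous_snd)).measurable

lemma ker_meas2 : Measurable (fun p : ℂ × ℂ => (ENNReal.ofReal (‖p.2 - p.1‖))⁻¹) := by
  apply Measurable.inv
  apply Measurable.ennreal_ofReal
  exact (continuous_norm.comp (continuous_snd.sub continuous_fst)).measurable

lemma newtonPot_meas (μ : Measure ℂ) [SFinite μ] : Measurable (newtonPot μ) :=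
  ker_meas2.lintegral_prod_right'

lemma vol_ball (c : ℂ) {s : ℝ} (hs : 0 ≤ s) :
    volume (ball c s) = ENNReal.ofReal (Real.pi * s ^ 2) := by
  rw [Complex.volume_ball, ← ENNReal.ofReal_pow hs, ← NNReal.coe_real_pi,
    ENNReal.ofReal_coe_nnreal.symm, ← ENNReal.ofReal_mul (by positivity), mul_comm]

lemma cover (c : ℂ) {r : ℝ} (hr : 0 < r) :
    ball c r ⊆ {c} ∪ ⋃ n : ℕ, (ball c (r / 2 ^ n) \ ball c (r / 2 ^ (n + 1))) := by
  intro w hw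
  rcases eq_or_ne w c with h | h
  · exact Or.inl h
  right
  have hd : 0 < dist w c := dist_pos.mpr h
  have hdr : dist w c < r := mem_ball.mp hw
  have hP : ∃ n : ℕ, r / 2 ^ (n + 1) ≤ dist w c := by
    obtain ⟨n, hn⟩ := exists_pow_lt_of_lt_one (div_pos hd hr) (by norm_num : (1:ℝ)/2 < 1)
    refine ⟨n, ?_⟩
    have : r * (1/2)^n < dist w c := by
      rw [mul_comm, ← lt_div_iff₀ hr]; exact hn
    have h2 : r / 2 ^ (n+1) ≤ r / 2 ^ n := by
      apply div_le_div_of_nonneg_left hr.le (by positivity)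
      exact pow_le_pow_right₀ (by norm_num) (Nat.le_succ n)
    calc r / 2 ^ (n+1) ≤ r / 2 ^ n := h2
      _ = r * (1/2)^n := by rw [div_pow, one_pow]; ring
      _ ≤ dist w c := this.le
  classical
  let n₀ := Nat.find hP
  refine Set.mem_iUnion.mpr ⟨n₀, ?_, ?_⟩
  · rw [mem_ball]
    rcases Nat.eq_zero_or_pos n₀ with h0 | h0
    · rw [h0]; simpa using hdr
    · obtain ⟨m, hm⟩ := Nat.exists_eq_add_of_lt h0
      have := Nat.find_min hP (m := m) (by omega)
      push_neg at this
      have : dist w c < r / 2 ^ (m + 1) := this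
      rwa [show n₀ = m + 1 by omega]
  · rw [mem_ball, not_lt]
    exact Nat.find_spec hP

lemma singular_bound (c : ℂ) {r : ℝ} (hr : 0 < r) :
    ∫⁻ w in ball c r, (ENNReal.ofReal (‖w - c‖))⁻¹ ∂volume
      ≤ ENNReal.ofReal (4 * Real.pi * r) := by
  set f : ℂ → ℝ≥0∞ := fun w => (ENNReal.ofReal (‖w - c‖))⁻¹ with hf
  have h1 : ∫⁻ w in ball c r, f w ∂volume
      ≤ ∫⁻ w in ({c} : Set ℂ), f w ∂volume +
        ∫⁻ w in ⋃ n : ℕ, (ball c (r / 2 ^ n) \ ball c (r / 2 ^ (n + 1))), f w ∂volume := by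
    refine le_trans (lintegral_mono_set (cover c hr)) (lintegral_union_le _ _ _)
  have h2 : ∫⁻ w in ({c} : Set ℂ), f w ∂volume = 0 := by
    rw [Measure.restrict_eq_zero.mpr (by simp), lintegral_zero_measure]
  have h3 : ∀ n : ℕ, ∫⁻ w in (ball c (r / 2 ^ n) \ ball c (r / 2 ^ (n + 1))), f w ∂volume
      ≤ ENNReal.ofReal (2 * Real.pi * r * (1/2) ^ n) := by
    intro n
    have hb : ∀ w ∈ ball c (r / 2 ^ n) \ ball c (r / 2 ^ (n + 1)),
        f w ≤ ENNReal.ofReal ((r / 2 ^ (n+1))⁻¹) := by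
      intro w hw
      have h4 : r / 2 ^ (n+1) ≤ ‖w - c‖ := by
        have := hw.2
        rw [mem_ball, not_lt] at this
        simpa [Complex.dist_eq] using this
      rw [hf]
      rw [ENNReal.ofReal_inv_of_pos (by positivity)]
      exact ENNReal.inv_le_inv.mpr (ENNReal.ofReal_le_ofReal h4)
    calc ∫⁻ w in (ball c (r / 2 ^ n) \ ball c (r / 2 ^ (n + 1))), f w ∂volume
        ≤ ∫⁻ _ in (ball c (r / 2 ^ n) \ ball c (r / 2 ^ (n + 1))),
            ENNReal.ofReal ((r / 2 ^ (n+1))⁻¹) ∂volume := setLIntegral_mono' (measurableSet_ball.diff measurableSet_ball) hb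
      _ = ENNReal.ofReal ((r / 2 ^ (n+1))⁻¹) * volume (ball c (r / 2 ^ n) \ ball c (r / 2 ^ (n + 1))) := by
          rw [setLIntegral_const]
      _ ≤ ENNReal.ofReal ((r / 2 ^ (n+1))⁻¹) * volume (ball c (r / 2 ^ n)) := by
          gcongr; exact Set.diff_subset
      _ = ENNReal.ofReal ((r / 2 ^ (n+1))⁻¹) * ENNReal.ofReal (Real.pi * (r / 2 ^ n) ^ 2) := by
          rw [vol_ball c (by positivity)]
      _ = ENNReal.ofReal ((r / 2 ^ (n+1))⁻¹ * (Real.pi * (r / 2 ^ n) ^ 2)) := by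
          rw [← ENNReal.ofReal_mul (by positivity)]
      _ = ENNReal.ofReal (2 * Real.pi * r * (1/2) ^ n) := by
          congr 1
          rw [one_div_pow]
          field_simp
          ring
  calc ∫⁻ w in ball c r, f w ∂volume
      ≤ ∫⁻ w in ({c} : Set ℂ), f w ∂volume +
        ∫⁻ w in ⋃ n : ℕ, (ball c (r / 2 ^ n) \ ball c (r / 2 ^ (n + 1))), f w ∂volume := h1
    _ ≤ 0 + ∑' n : ℕ, ∫⁻ w in (ball c (r / 2 ^ n) \ ball c (r / 2 ^ (n + 1))), f w ∂volume := by
        rw [h2]; gcongr; exact lintegral_iUnion_le _ _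
    _ ≤ ∑' n : ℕ, ENNReal.ofReal (2 * Real.pi * r * (1/2) ^ n) := by
        rw [zero_add]; exact ENNReal.tsum_le_tsum h3
    _ = ENNReal.ofReal (∑' n : ℕ, 2 * Real.pi * r * (1/2) ^ n) := by
        rw [ENNReal.ofReal_tsum_of_nonneg (fun n => by positivity)
          ((summable_geometric_of_lt_one (by norm_num) (by norm_num)).mul_left _)]
    _ = ENNReal.ofReal (4 * Real.pi * r) := by
        rw [tsum_mul_left, tsum_geometric_two]
        congr 1; ring

lemma singular_bound' (c u : ℂ) {r : ℝ} (hr : 0 < r) :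
    ∫⁻ w in ball c r, (ENNReal.ofReal (‖w - u‖))⁻¹ ∂volume
      ≤ ENNReal.ofReal (5 * Real.pi * r) := by
  set f : ℂ → ℝ≥0∞ := fun w => (ENNReal.ofReal (‖w - u‖))⁻¹ with hf
  have hsplit : ball c r ⊆ (ball u r) ∪ (ball c r \ ball u r) := by
    intro w hw
    by_cases h : w ∈ ball u r
    · exact Or.inl h
    · exact Or.inr ⟨hw, h⟩
  calc ∫⁻ w in ball c r, f w ∂volume
      ≤ ∫⁻ w in ball u r, f w ∂volume + ∫⁻ w in ball c r \ ball u r, f w ∂volume :=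
        le_trans (lintegral_mono_set hsplit) (lintegral_union_le _ _ _)
    _ ≤ ENNReal.ofReal (4 * Real.pi * r) + ENNReal.ofReal (Real.pi * r) := by
        gcongr
        · exact singular_bound u hr
        · calc ∫⁻ w in ball c r \ ball u r, f w ∂volume
              ≤ ∫⁻ _ in ball c r \ ball u r, ENNReal.ofReal r⁻¹ ∂volume := by
                refine setLIntegral_mono' (measurableSet_ball.diff measurableSet_ball) ?_
                intro w hw
                have h4 : r ≤ ‖w - u‖ := by
                  have := hw.2; rw [mem_ball, not_lt] at this
                  simpa [Complex.dist_eq] using this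
                rw [hf, ENNReal.ofReal_inv_of_pos hr]
                exact ENNReal.inv_le_inv.mpr (ENNReal.ofReal_le_ofReal h4)
            _ = ENNReal.ofReal r⁻¹ * volume (ball c r \ ball u r) := setLIntegral_const _ _
            _ ≤ ENNReal.ofReal r⁻¹ * ENNReal.ofReal (Real.pi * r ^ 2) := by
                gcongr
                rw [← vol_ball c hr.le]
                exact measure_mono Set.diff_subset
            _ = ENNReal.ofReal (Real.pi * r) := by
                rw [← ENNReal.ofReal_mul (by positivity)]
                congr 1; field_simp
    _ = ENNReal.ofReal (5 * Real.pi * r) := by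
        rw [← ENNReal.ofReal_add (by positivity) (by positivity)]
        congr 1; ring

lemma inner_bound (ζ u : ℂ) {r : ℝ} (hr : 0 < r) :
    ∫⁻ w in ball ζ r, ENNReal.ofReal (‖w - ζ‖) *
        (ENNReal.ofReal (‖w - u‖))⁻¹ ∂volume
      ≤ ENNReal.ofReal (5 * Real.pi * r ^ 2) := by
  have hmeas : Measurable fun w : ℂ => (ENNReal.ofReal (‖w - u‖))⁻¹ := by
    apply Measurable.inv
    apply Measurable.ennreal_ofReal
    exact (continuous_norm.comp (continuous_id.sub continuous_const)).measurable
  calc ∫⁻ w in ball ζ r, ENNReal.ofReal (‖w - ζ‖) *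
        (ENNReal.ofReal (‖w - u‖))⁻¹ ∂volume
      ≤ ∫⁻ w in ball ζ r, ENNReal.ofReal r *
        (ENNReal.ofReal (‖w - u‖))⁻¹ ∂volume := by
        refine setLIntegral_mono' measurableSet_ball ?_
        intro w hw
        have := mem_ball.mp hw
        rw [Complex.dist_eq] at this
        exact mul_le_mul_left (ENNReal.ofReal_le_ofReal this.le) _
    _ = ENNReal.ofReal r * ∫⁻ w in ball ζ r, (ENNReal.ofReal (‖w - u‖))⁻¹ ∂volume :=
        lintegral_const_mul _ hmeas
    _ ≤ ENNReal.ofReal r * ENNReal.ofReal (5 * Real.pi * r) := by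
        gcongr
        exact singular_bound' ζ u hr
    _ = ENNReal.ofReal (5 * Real.pi * r ^ 2) := by
        rw [← ENNReal.ofReal_mul hr.le]
        congr 1; ring

lemma inner_far (ζ u : ℂ) {r δ : ℝ} (hr : 0 < r) (hδ : 0 < δ) (hrδ : r ≤ δ / 2)
    (hu : δ < dist u ζ) :
    ∫⁻ w in ball ζ r, ENNReal.ofReal (‖w - ζ‖) *
        (ENNReal.ofReal (‖w - u‖))⁻¹ ∂volume
      ≤ ENNReal.ofReal (Real.pi * r ^ 2 * (2 * r / δ)) := by
  calc ∫⁻ w in ball ζ r, ENNReal.ofReal (‖w - ζ‖) *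
        (ENNReal.ofReal (‖w - u‖))⁻¹ ∂volume
      ≤ ∫⁻ _ in ball ζ r, ENNReal.ofReal (2 * r / δ) ∂volume := by
        refine setLIntegral_mono' measurableSet_ball ?_
        intro w hw
        have h1 : ‖w - ζ‖ < r := by
          have := mem_ball.mp hw; rwa [Complex.dist_eq] at this
        have h2 : δ / 2 ≤ ‖w - u‖ := by
          have ht : dist u ζ ≤ dist w u + dist w ζ := dist_triangle_left u ζ w
          have hb := mem_ball.mp hw
          rw [← Complex.dist_eq]
          linarith
        calc ENNReal.ofReal (‖w - ζ‖) * (ENNReal.ofReal (‖w - u‖))⁻¹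
            ≤ ENNReal.ofReal r * (ENNReal.ofReal (δ / 2))⁻¹ := by
              exact mul_le_mul' (ENNReal.ofReal_le_ofReal h1.le)
                (ENNReal.inv_le_inv.mpr (ENNReal.ofReal_le_ofReal h2))
          _ = ENNReal.ofReal (2 * r / δ) := by
              rw [← ENNReal.ofReal_inv_of_pos (by positivity),
                ← ENNReal.ofReal_mul hr.le]
              congr 1; field_simp
    _ = ENNReal.ofReal (2 * r / δ) * volume (ball ζ r) := setLIntegral_const _ _
    _ = ENNReal.ofReal (Real.pi * r ^ 2 * (2 * r / δ)) := by
        rw [vol_ball ζ hr.le, ← ENNReal.ofReal_mul (by positivity)]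
        congr 1; ring

theorem stmt_7 (μ : Measure ℂ) [IsFiniteMeasure μ] (ζ : ℂ) (hζ : μ {ζ} = 0)
    (ε : ℝ) (hε : 0 < ε) :
    Tendsto (fun r : ℝ =>
        volume ({w : ℂ | ENNReal.ofReal ε < ENNReal.ofReal (‖w - ζ‖) * newtonPot μ w}
            ∩ ball ζ r) / ENNReal.ofReal (Real.pi * r ^ 2))
      (nhdsWithin 0 (Set.Ioi 0)) (nhds 0) := by
  set f : ℂ → ℝ≥0∞ := fun w => ENNReal.ofReal (‖w - ζ‖) * newtonPot μ w with hfdef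
  have hfmeas : Measurable f := by
    apply Measurable.mul
    · exact Measurable.ennreal_ofReal
        (continuous_norm.comp (continuous_id.sub continuous_const)).measurable
    · exact newtonPot_meas μ
  set S : Set ℂ := {w : ℂ | ENNReal.ofReal ε < f w} with hSdef
  have hSmeas : MeasurableSet S := measurableSet_lt measurable_const hfmeas
  set I : ℂ → ℝ → ℝ≥0∞ := fun u r => ∫⁻ w in ball ζ r,
      ENNReal.ofReal (‖w - ζ‖) * (ENNReal.ofReal (‖w - u‖))⁻¹ ∂volume
      with hIdef
  have hεne0 : (ENNReal.ofReal ε) ≠ 0 := (ENNReal.ofReal_pos.mpr hε).ne'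
  -- Tonelli
  have hT : ∀ r : ℝ, ∫⁻ w in ball ζ r, f w ∂volume = ∫⁻ u, I u r ∂μ := by
    intro r
    have h1 : ∀ w : ℂ, f w = ∫⁻ u, ENNReal.ofReal (‖w - ζ‖) *
        (ENNReal.ofReal (‖w - u‖))⁻¹ ∂μ := by
      intro w
      have hm : Measurable fun u : ℂ => (ENNReal.ofReal (‖w - u‖))⁻¹ := by
        apply Measurable.inv
        apply Measurable.ennreal_ofReal
        exact (continuous_norm.comp (continuous_const.sub continuous_id)).measurable
      rw [hfdef]
      simp only [newtonPot]
      rw [show (∫⁻ u, (ENNReal.ofReal (‖u - w‖))⁻¹ ∂μ)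
          = ∫⁻ u, (ENNReal.ofReal (‖w - u‖))⁻¹ ∂μ from
        lintegral_congr fun u => by rw [norm_sub_rev]]
      exact (lintegral_const_mul _ hm).symm
    calc ∫⁻ w in ball ζ r, f w ∂volume
        = ∫⁻ w in ball ζ r, ∫⁻ u, ENNReal.ofReal (‖w - ζ‖) *
            (ENNReal.ofReal (‖w - u‖))⁻¹ ∂μ ∂volume := by
          exact lintegral_congr fun w => h1 w
      _ = ∫⁻ u, I u r ∂μ := by
          apply lintegral_lintegral_swap
          apply AEMeasurable.mul
          · exact (Measurable.ennreal_ofReal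
              ((continuous_norm.comp (continuous_fst.sub continuous_const)).measurable)).aemeasurable
          · exact (ker_meas.comp measurable_id).aemeasurable
  -- Chebyshev
  have hCheb : ∀ r : ℝ, volume (S ∩ ball ζ r) ≤ (∫⁻ u, I u r ∂μ) / ENNReal.ofReal ε := by
    intro r
    rw [← hT r, ENNReal.le_div_iff_mul_le (Or.inl hεne0) (Or.inl ENNReal.ofReal_ne_top)]
    calc volume (S ∩ ball ζ r) * ENNReal.ofReal ε
        = ENNReal.ofReal ε * (volume.restrict (ball ζ r)) S := by
          rw [Measure.restrict_apply hSmeas, mul_comm]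
      _ ≤ ENNReal.ofReal ε * (volume.restrict (ball ζ r)) {w : ℂ | ENNReal.ofReal ε ≤ f w} := by
          have hsub : S ⊆ {w : ℂ | ENNReal.ofReal ε ≤ f w} := by
            intro w hw
            have hw' : ENNReal.ofReal ε < f w := hw
            exact le_of_lt hw'
          exact mul_le_mul_right (measure_mono hsub) _
      _ ≤ ∫⁻ w, f w ∂(volume.restrict (ball ζ r)) :=
          mul_meas_ge_le_lintegral₀ hfmeas.aemeasurable _
  -- main limit
  rw [ENNReal.tendsto_nhds_zero]
  intro η hη
  rcases eq_top_or_lt_top η with rfl | hηtop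
  · exact Eventually.of_forall fun r => le_top
  have hη2 : (0 : ℝ≥0∞) < η / 2 := ENNReal.div_pos hη.ne' (by norm_num)
  set c5 : ℝ≥0∞ := ENNReal.ofReal (5 / ε) with hc5
  have hc5ne0 : c5 ≠ 0 := (ENNReal.ofReal_pos.mpr (by positivity)).ne'
  have hc5top : c5 ≠ ⊤ := ENNReal.ofReal_ne_top
  -- choose δ
  have hkey : Tendsto (fun n : ℕ => μ (closedBall ζ (1 / (n + 1)))) atTop (𝓝 0) := by
    have h1 := tendsto_measure_iInter_atTop (μ := μ)
      (s := fun n : ℕ => closedBall ζ (1 / (n + 1)))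
      (fun n => measurableSet_closedBall.nullMeasurableSet)
      (fun m n hmn => closedBall_subset_closedBall (by
        apply one_div_le_one_div_of_le (by positivity)
        exact_mod_cast by exact_mod_cast add_le_add_left (Nat.cast_le.mpr hmn) 1))
      ⟨0, measure_ne_top μ _⟩
    have h2 : (⋂ n : ℕ, closedBall ζ (1 / (n + 1 : ℝ))) = {ζ} := by
      ext x
      simp only [Set.mem_iInter, mem_closedBall, Set.mem_singleton_iff]
      constructor
      · intro h
        by_contra hx
        obtain ⟨n, hn⟩ := exists_nat_one_div_lt (dist_pos.mpr hx)
        exact absurd (h n) (not_le.mpr hn)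
      · rintro rfl n
        rw [dist_self]
        positivity
    rw [h2, hζ] at h1
    exact h1
  obtain ⟨n, hn⟩ := (hkey.eventually_lt_const (ENNReal.div_pos hη2.ne' hc5top)).exists
  set δ : ℝ := 1 / (n + 1) with hδdef
  have hδpos : 0 < δ := by positivity
  have hnear : μ (closedBall ζ δ) * c5 ≤ η / 2 := by
    calc μ (closedBall ζ δ) * c5 ≤ η / 2 / c5 * c5 := mul_le_mul_left hn.le c5
      _ = η / 2 := ENNReal.div_mul_cancel hc5ne0 hc5top
  have hfar : Tendsto (fun r : ℝ => μ Set.univ * ENNReal.ofReal (2 * r / (δ * ε)))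
      (nhdsWithin 0 (Set.Ioi 0)) (𝓝 0) := by
    have h0 : Tendsto (fun r : ℝ => ENNReal.ofReal (2 * r / (δ * ε)))
        (nhdsWithin 0 (Set.Ioi 0)) (𝓝 0) := by
      have hc : Tendsto (fun r : ℝ => 2 * r / (δ * ε)) (𝓝 0) (𝓝 0) := by
        have hcont : Continuous fun r : ℝ => 2 * r / (δ * ε) := by fun_prop
        simpa using hcont.tendsto 0
      have := ENNReal.tendsto_ofReal hc
      simpa using this.mono_left nhdsWithin_le_nhds
    simpa using ENNReal.Tendsto.const_mul h0 (Or.inr (measure_ne_top μ _))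
  have h2ev : ∀ᶠ r in nhdsWithin (0:ℝ) (Set.Ioi 0),
      μ Set.univ * ENNReal.ofReal (2 * r / (δ * ε)) ≤ η / 2 :=
    hfar.eventually_le_const hη2
  have hIoo : Set.Ioo (0:ℝ) (δ/2) ∈ nhdsWithin (0:ℝ) (Set.Ioi 0) :=
    Ioo_mem_nhdsGT_of_mem ⟨le_refl 0, by positivity⟩
  filter_upwards [h2ev, hIoo] with r hr2 hrIoo
  obtain ⟨hrpos, hrlt⟩ := hrIoo
  have hrδ : r ≤ δ / 2 := hrlt.le
  have hπr : (0:ℝ) < Real.pi * r ^ 2 := by positivity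
  -- split integral
  have hsplit : ∫⁻ u, I u r ∂μ ≤ ENNReal.ofReal (5 * Real.pi * r ^ 2) * μ (closedBall ζ δ)
      + ENNReal.ofReal (Real.pi * r ^ 2 * (2 * r / δ)) * μ Set.univ := by
    rw [← lintegral_add_compl (fun u => I u r) (measurableSet_closedBall (x := ζ) (ε := δ))]
    gcongr
    · calc ∫⁻ u in closedBall ζ δ, I u r ∂μ
          ≤ ∫⁻ _ in closedBall ζ δ, ENNReal.ofReal (5 * Real.pi * r ^ 2) ∂μ :=
            setLIntegral_mono' measurableSet_closedBall fun u _ => inner_bound ζ u hrpos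
        _ = ENNReal.ofReal (5 * Real.pi * r ^ 2) * μ (closedBall ζ δ) := setLIntegral_const _ _
    · calc ∫⁻ u in (closedBall ζ δ)ᶜ, I u r ∂μ
          ≤ ∫⁻ _ in (closedBall ζ δ)ᶜ, ENNReal.ofReal (Real.pi * r ^ 2 * (2 * r / δ)) ∂μ := by
            refine setLIntegral_mono' measurableSet_closedBall.compl fun u hu => ?_
            refine inner_far ζ u hrpos hδpos hrδ ?_
            have : ¬ dist u ζ ≤ δ := fun h => hu (mem_closedBall.mpr h)
            linarith [not_le.mp this]
        _ = ENNReal.ofReal (Real.pi * r ^ 2 * (2 * r / δ)) * μ ((closedBall ζ δ)ᶜ) :=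
            setLIntegral_const _ _
        _ ≤ ENNReal.ofReal (Real.pi * r ^ 2 * (2 * r / δ)) * μ Set.univ := by
            gcongr
            exact Set.subset_univ _
  -- final chain
  calc volume (S ∩ ball ζ r) / ENNReal.ofReal (Real.pi * r ^ 2)
      ≤ ((∫⁻ u, I u r ∂μ) / ENNReal.ofReal ε) / ENNReal.ofReal (Real.pi * r ^ 2) := by
        gcongr
        exact hCheb r
    _ ≤ ((ENNReal.ofReal (5 * Real.pi * r ^ 2) * μ (closedBall ζ δ)
          + ENNReal.ofReal (Real.pi * r ^ 2 * (2 * r / δ)) * μ Set.univ) / ENNReal.ofReal ε)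
          / ENNReal.ofReal (Real.pi * r ^ 2) := by
        gcongr
    _ = μ (closedBall ζ δ) * (ENNReal.ofReal (5 * Real.pi * r ^ 2) / ENNReal.ofReal ε
          / ENNReal.ofReal (Real.pi * r ^ 2))
        + μ Set.univ * (ENNReal.ofReal (Real.pi * r ^ 2 * (2 * r / δ)) / ENNReal.ofReal ε
          / ENNReal.ofReal (Real.pi * r ^ 2)) := by
        rw [ENNReal.add_div, ENNReal.add_div]
        congr 1
        · rw [mul_comm, mul_div_assoc, mul_div_assoc]
        · rw [mul_comm, mul_div_assoc, mul_div_assoc]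
    _ = μ (closedBall ζ δ) * c5 + μ Set.univ * ENNReal.ofReal (2 * r / (δ * ε)) := by
        congr 2
        · rw [← ENNReal.ofReal_div_of_pos hε, ← ENNReal.ofReal_div_of_pos hπr, hc5]
          congr 1
          field_simp
        · rw [← ENNReal.ofReal_div_of_pos hε, ← ENNReal.ofReal_div_of_pos hπr]
          congr 1
          field_simp
    _ ≤ η / 2 + η / 2 := by gcongr
    _ = η := ENNReal.add_halves η
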